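/- The coreness function is a fixed point of the H-index update: for every vertex v, coreness(v) equals the H-index of the multiset of corenesses of the neighbors of v. -/
import Mathlib


open scoped Classical
open Finset

noncomputable section

variable {V : Type*} [Fintype V]

/-- `S` induces a subgraph of `G` in which every vertex has degree at least `k`. -/
def IsCoreSet (G : SimpleGraph V) (k : ℕ) (S : Finset V) : Prop :=
  ∀ v ∈ S, k ≤ (S.filter (G.Adj v)).card

/-- The vertex set of the `k`-core of `G`: all vertices lying in some induced
subgraph of minimum degree at least `k`. -/
def coreSet (G : SimpleGraph V) (k : ℕ) : Finset V :=
  Finset.univ.filter fun v => ∃ S : Finset V, IsCoreSet G k S ∧ v ∈ S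

/-- The coreness of `v`: the largest `k` such that `v` belongs to the `k`-core. -/
def coreness (G : SimpleGraph V) (v : V) : ℕ :=
  Nat.findGreatest (fun k => v ∈ coreSet G k) (Fintype.card V)

/-- The H-index of a finite multiset `S` of naturals: the largest `h` such that
at least `h` elements of `S` are `≥ h`. -/
def hIndex (S : Multiset ℕ) : ℕ :=
  Nat.findGreatest (fun h => h ≤ (S.filter (fun x => h ≤ x)).card) (Multiset.card S)

lemma coreSet_anti (G : SimpleGraph V) {j k : ℕ} (hjk : j ≤ k) :
    coreSet G k ⊆ coreSet G j := by
  intro v hv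
  simp only [coreSet, mem_filter, mem_univ, true_and] at hv ⊢
  obtain ⟨S, hS, hvS⟩ := hv
  exact ⟨S, fun u hu => hjk.trans (hS u hu), hvS⟩

lemma mem_coreSet_zero (G : SimpleGraph V) (v : V) : v ∈ coreSet G 0 := by
  simp only [coreSet, mem_filter, mem_univ, true_and]
  exact ⟨{v}, fun u _ => Nat.zero_le _, mem_singleton_self v⟩

lemma isCoreSet_coreSet (G : SimpleGraph V) (k : ℕ) : IsCoreSet G k (coreSet G k) := by
  intro v hv
  simp only [coreSet, mem_filter, mem_univ, true_and] at hv
  obtain ⟨S, hS, hvS⟩ := hv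
  refine (hS v hvS).trans (card_le_card ?_)
  intro u hu
  rw [mem_filter] at hu ⊢
  refine ⟨?_, hu.2⟩
  simp only [coreSet, mem_filter, mem_univ, true_and]
  exact ⟨S, hS, hu.1⟩

lemma coreSet_le_card {G : SimpleGraph V} {k : ℕ} {v : V} (hv : v ∈ coreSet G k) :
    k ≤ Fintype.card V := by
  have := isCoreSet_coreSet G k v hv
  exact this.trans ((card_le_card (filter_subset _ _)).trans (card_le_univ _))

lemma le_coreness_iff {G : SimpleGraph V} {k : ℕ} {v : V} :
    k ≤ coreness G v ↔ v ∈ coreSet G k := by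
  constructor
  · intro h
    have := Nat.findGreatest_spec (P := fun k => v ∈ coreSet G k) (n := Fintype.card V)
      (Nat.zero_le _) (mem_coreSet_zero G v)
    exact coreSet_anti G h this
  · intro h
    exact Nat.le_findGreatest (coreSet_le_card h) h

theorem coreness_fixed_point_hIndex (G : SimpleGraph V) (v : V) :
    coreness G v = hIndex ((G.neighborFinset v).val.map (coreness G)) := by
  set M := (G.neighborFinset v).val.map (coreness G) with hM
  have hfilter : ∀ h : ℕ, (M.filter (fun x => h ≤ x)).card
      = ((G.neighborFinset v).filter (fun u => h ≤ coreness G u)).card := by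
    intro h
    rw [hM, Multiset.filter_map, Multiset.card_map]
    rfl
  have hMcard : Multiset.card M = (G.neighborFinset v).card := by
    rw [hM, Multiset.card_map]; rfl
  apply le_antisymm
  · -- coreness ≤ hIndex
    set c := coreness G v with hc
    have hv : v ∈ coreSet G c := le_coreness_iff.mp le_rfl
    have hdeg : c ≤ ((coreSet G c).filter (G.Adj v)).card := isCoreSet_coreSet G c v hv
    have hsub : (coreSet G c).filter (G.Adj v) ⊆
        (G.neighborFinset v).filter (fun u => c ≤ coreness G u) := by
      intro u hu
      rw [mem_filter] at hu ⊢
      exact ⟨(SimpleGraph.mem_neighborFinset G v u).mpr hu.2, le_coreness_iff.mpr hu.1⟩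
    have h1 : c ≤ ((G.neighborFinset v).filter (fun u => c ≤ coreness G u)).card :=
      hdeg.trans (card_le_card hsub)
    refine Nat.le_findGreatest ?_ ?_
    · rw [hMcard]
      exact h1.trans (card_le_card (filter_subset _ _))
    · rw [hfilter]; exact h1
  · -- hIndex ≤ coreness
    set h := hIndex M with hh
    have hP : h ≤ (M.filter (fun x => h ≤ x)).card :=
      Nat.findGreatest_spec (P := fun h => h ≤ (M.filter (fun x => h ≤ x)).card)
        (n := Multiset.card M) (Nat.zero_le _) (Nat.zero_le _)
    rw [hfilter] at hP
    set T := (G.neighborFinset v).filter (fun u => h ≤ coreness G u) with hT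
    have hTcore : T ⊆ coreSet G h := by
      intro u hu
      rw [hT, mem_filter] at hu
      exact le_coreness_iff.mp hu.2
    set S := insert v (coreSet G h) with hS
    have hcore : IsCoreSet G h S := by
      intro u hu
      rw [hS, mem_insert] at hu
      rcases hu with rfl | hu
      · refine hP.trans (card_le_card ?_)
        intro w hw
        rw [mem_filter]
        refine ⟨hS ▸ mem_insert_of_mem (hTcore hw), ?_⟩
        rw [hT, mem_filter, SimpleGraph.mem_neighborFinset] at hw
        exact hw.1
      · refine (isCoreSet_coreSet G h u hu).trans (card_le_card ?_)
        exact filter_subset_filter _ (hS ▸ subset_insert v _)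
    have hvS : v ∈ coreSet G h := by
      simp only [coreSet, mem_filter, mem_univ, true_and]
      exact ⟨S, hcore, hS ▸ mem_insert_self v _⟩
    exact le_coreness_iff.mpr hvS

end
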